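/- (Discrete-time RAGE theorem, absolutely continuous part.) Let U be a unitary operator on ℓ²(ℤ,ℂ) and ψ ∈ ℓ²(ℤ,ℂ). Suppose there is a finite Borel measure μ on the unit circle ∂𝔻, absolutely continuous with respect to arc-length measure Leb on ∂𝔻, whose moments match ψ: ∫_{∂𝔻} zⁿ dμ(z) = ⟨ψ, Uⁿψ⟩ for all n ∈ ℤ (i.e. the spectral measure of ψ is absolutely continuous). Then for every J ∈ ℕ, Σ_{j=−J}^{J} |⟨δ_j, Uⁿψ⟩|² → 0 as |n| → ∞. -/

import Mathlib

noncomputable section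
open scoped ENNReal FourierTransform
open MeasureTheory

/-- The Hilbert space ℓ²(ℤ, ℂ). -/
abbrev l2Z := lp (fun _ : ℤ => ℂ) 2

/-- The standard orthonormal basis vector δ_j of ℓ²(ℤ, ℂ). -/
def delta (j : ℤ) : l2Z := lp.single 2 j (1 : ℂ)

/-- Arc-length measure on the unit circle ∂𝔻 ⊆ ℂ, the pushforward of Lebesgue
measure on [0, 2π) under τ ↦ e^{iτ}. -/
def circleLeb : Measure ℂ :=
  Measure.map (fun τ : ℝ => Complex.exp (Complex.I * τ))
    (volume.restrict (Set.Ico 0 (2 * Real.pi)))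

open Filter Complex Real Set in
lemma measurable_zpow_c (n : ℤ) : Measurable (fun w : ℂ => w ^ n) := by
  cases n with
  | ofNat k => simpa using (measurable_id.pow_const k)
  | negSucc k =>
      simp only [zpow_negSucc]
      exact (measurable_id.pow_const (k + 1)).inv

open Filter Complex Real Set in
lemma circleLeb_finite : IsFiniteMeasure circleLeb := by
  constructor
  rw [circleLeb, Measure.map_apply (by fun_prop) MeasurableSet.univ]
  simp only [Set.preimage_univ]
  rw [Measure.restrict_apply_univ]
  simp [Real.pi_pos.le]
  exact ENNReal.mul_lt_top (by norm_num) ENNReal.ofReal_lt_top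

open Filter Complex Real Set in
/-- Riemann–Lebesgue: the moments of a measure absolutely continuous w.r.t. arc length
tend to zero. -/
lemma moments_tendsto_zero (μ : Measure ℂ) [IsFiniteMeasure μ]
    (habs : μ ≪ circleLeb) :
    Tendsto (fun n : ℤ => ∫ w, w ^ n ∂μ) cofinite (nhds 0) := by
  have : IsFiniteMeasure circleLeb := circleLeb_finite
  have hπ : (0:ℝ) < 2 * π := by positivity
  set e : ℝ → ℂ := fun τ => Complex.exp (Complex.I * τ) with he
  have hemeas : Measurable e := by fun_prop
  set g : ℂ → ℝ := fun w => (μ.rnDeriv circleLeb w).toReal with hg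
  have hmeas_g : Measurable g := (Measure.measurable_rnDeriv _ _).ennreal_toReal
  set F : ℝ → ℂ := (Set.Ico (0:ℝ) (2 * π)).indicator (fun τ => (g (e τ) : ℂ)) with hF
  -- the homeomorphism n ↦ -(n / (2π)) of ℝ
  set h : ℝ ≃ₜ ℝ := (Homeomorph.mulRight₀ ((2*π)⁻¹) (by positivity)).trans (Homeomorph.neg ℝ)
    with hh
  have hmap : Tendsto (fun n : ℤ => h (n : ℝ)) cofinite (cocompact ℝ) :=
    Filter.Tendsto.comp (h.map_cocompact.le) Int.tendsto_coe_cofinite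
  have hRL := (Real.tendsto_integral_exp_smul_cocompact F).comp hmap
  have key : (fun n : ℤ => ∫ v : ℝ, 𝐞 (-(v * h (n:ℝ))) • F v) =
      (fun n : ℤ => ∫ w, w ^ n ∂μ) := by
    funext n
    have h1 : ∫ w, w ^ n ∂μ = ∫ w, g w • w ^ n ∂circleLeb :=
      (MeasureTheory.integral_rnDeriv_smul habs (f := fun w => w ^ n)).symm
    have h2 : ∫ w, g w • w ^ n ∂circleLeb
        = ∫ τ in Set.Ico (0:ℝ) (2*π), g (e τ) • (e τ) ^ n := by
      rw [circleLeb, integral_map hemeas.aemeasurable]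
      exact ((hmeas_g.aestronglyMeasurable.smul
        (measurable_zpow_c n).aestronglyMeasurable))
    rw [h1, h2, ← integral_indicator measurableSet_Ico]
    congr 1
    funext v
    by_cases hv : v ∈ Set.Ico (0:ℝ) (2*π)
    · simp only [Set.indicator_of_mem hv, hF, Circle.smul_def]
      have hval : ((𝐞 (-(v * h (n:ℝ)))) : ℂ) = (e v) ^ n := by
        rw [Real.fourierChar_apply]
        have hhn : h (n:ℝ) = -((n:ℝ) * (2*π)⁻¹) := rfl
        have harg : 2 * π * -(v * h (n:ℝ)) = v * n := by
          rw [hhn]; field_simp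
        rw [harg]
        have : ((v * n : ℝ) : ℂ) * Complex.I = (n : ℤ) * (Complex.I * v) := by
          push_cast; ring
        rw [this, Complex.exp_int_mul]
      rw [hval, Complex.real_smul, smul_eq_mul]
      ring
    · simp [Set.indicator_of_notMem hv, hF]
  exact hRL.congr fun n => congrFun key n

open Filter Complex Real Set in
/-- Core lemma: for any vector φ, ⟨φ, Uⁿψ⟩ → 0 along cofinite. -/
lemma inner_pow_tendsto_zero (U : l2Z ≃ₗᵢ[ℂ] l2Z) (ψ : l2Z)
    (μ : Measure ℂ) [IsFiniteMeasure μ]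
    (habs : μ ≪ circleLeb)
    (hmom : ∀ n : ℤ, ∫ w, w ^ n ∂μ = (inner ℂ ψ ((U ^ n) ψ) : ℂ))
    (φ : l2Z) :
    Tendsto (fun n : ℤ => (inner ℂ φ ((U ^ n) ψ) : ℂ)) cofinite (nhds 0) := by
  have hRL := moments_tendsto_zero μ habs
  -- inner products between orbit vectors
  have hinner : ∀ k n : ℤ, (inner ℂ ((U^k) ψ) ((U^n) ψ) : ℂ) = ∫ w, w ^ (n - k) ∂μ := by
    intro k n
    rw [hmom]
    have h1 : (U^n) ψ = (U^k) ((U^(n-k)) ψ) := by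
      have : U^k * U^(n-k) = U^n := by rw [← zpow_add]; ring_nf
      rw [← this]; rfl
    rw [h1, LinearIsometryEquiv.inner_map_map]
  set S := (Submodule.span ℂ (Set.range fun k : ℤ => (U^k) ψ)).topologicalClosure with hS
  have hmemS : ∀ n : ℤ, (U^n) ψ ∈ S := fun n =>
    Submodule.le_topologicalClosure _ (Submodule.subset_span ⟨n, rfl⟩)
  set c : l2Z := (S.orthogonalProjectionOnto φ : l2Z) with hc
  have hproj : ∀ n : ℤ, (inner ℂ φ ((U^n) ψ) : ℂ) = inner ℂ c ((U^n) ψ) := by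
    intro n
    have horth : φ - c ∈ Sᗮ := Submodule.sub_starProjection_mem_orthogonal (K := S) φ
    have h0 : (inner ℂ (φ - c) ((U^n) ψ) : ℂ) = 0 :=
      (Submodule.mem_orthogonal' S (φ - c)).mp horth _ (hmemS n)
    rw [inner_sub_left] at h0
    linear_combination h0
  rw [NormedAddCommGroup.tendsto_nhds_zero]
  intro ε hε
  have hψ1 : (0:ℝ) < ‖ψ‖ + 1 := by positivity
  set ε' : ℝ := ε / (2 * (‖ψ‖ + 1)) with hε'
  have hε'pos : 0 < ε' := by positivity
  -- approximate c by a finite combination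
  have hcS : c ∈ closure ((Submodule.span ℂ (Set.range fun k : ℤ => (U^k) ψ)) : Set l2Z) := by
    have h1 : c ∈ S := (S.orthogonalProjectionOnto φ).2
    rw [← Submodule.topologicalClosure_coe]
    exact h1
  obtain ⟨v, hv_mem, hv_dist⟩ := Metric.mem_closure_iff.mp hcS ε' hε'pos
  obtain ⟨α, hα⟩ := Finsupp.mem_span_range_iff_exists_finsupp.mp hv_mem
  -- ⟨v, Uⁿψ⟩ → 0
  have hv_tendsto : Tendsto (fun n : ℤ => (inner ℂ v ((U^n) ψ) : ℂ)) cofinite (nhds 0) := by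
    have hrepr : ∀ n : ℤ, (inner ℂ v ((U^n) ψ) : ℂ)
        = ∑ k ∈ α.support, (starRingEnd ℂ) (α k) * ∫ w, w ^ (n - k) ∂μ := by
      intro n
      rw [← hα, Finsupp.sum, sum_inner]
      exact Finset.sum_congr rfl fun k _ => by
        rw [inner_smul_left, hinner k n]
    have : Tendsto (fun n : ℤ =>
        ∑ k ∈ α.support, (starRingEnd ℂ) (α k) * ∫ w, w ^ (n - k) ∂μ) cofinite (nhds 0) := by
      have h0 : (0:ℂ) = ∑ k ∈ α.support, (starRingEnd ℂ) (α k) * 0 := by simp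
      rw [h0]
      refine tendsto_finset_sum _ fun k _ => Tendsto.const_mul _ ?_
      have hshift : Tendsto (fun n : ℤ => n - k) cofinite cofinite :=
        Function.Injective.tendsto_cofinite (fun a b hab => by omega)
      exact hRL.comp hshift
    exact Tendsto.congr (fun n => (hrepr n).symm) this
  have hev : ∀ᶠ n : ℤ in cofinite, ‖(inner ℂ v ((U^n) ψ) : ℂ)‖ < ε / 2 := by
    have := NormedAddCommGroup.tendsto_nhds_zero.mp hv_tendsto (ε/2) (by positivity)
    exact this
  filter_upwards [hev] with n hn
  have hnorm : ‖(U^n) ψ‖ = ‖ψ‖ := LinearIsometryEquiv.norm_map _ ψ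
  have hcv : ‖c - v‖ < ε' := by rwa [← dist_eq_norm]
  calc ‖(inner ℂ φ ((U^n) ψ) : ℂ)‖
      = ‖(inner ℂ (c - v) ((U^n) ψ) : ℂ) + inner ℂ v ((U^n) ψ)‖ := by
        rw [hproj n, ← inner_add_left, sub_add_cancel]
    _ ≤ ‖(inner ℂ (c - v) ((U^n) ψ) : ℂ)‖ + ‖(inner ℂ v ((U^n) ψ) : ℂ)‖ := norm_add_le _ _
    _ ≤ ‖c - v‖ * ‖(U^n) ψ‖ + ‖(inner ℂ v ((U^n) ψ) : ℂ)‖ := by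
        gcongr; exact norm_inner_le_norm _ _
    _ < ε' * (‖ψ‖ + 1) + ε / 2 := by
        rw [hnorm]
        have h1 : ‖c - v‖ * ‖ψ‖ ≤ ε' * (‖ψ‖ + 1) := by nlinarith [norm_nonneg (c - v), norm_nonneg ψ]
        nlinarith
    _ = ε / 2 + ε / 2 := by rw [hε']; field_simp
    _ = ε := by ring

/-- discrete-time RAGE theorem, absolutely continuous part. If the
spectral measure of ψ (a finite measure on ∂𝔻 with moments ⟨ψ, Uⁿψ⟩) is absolutely
continuous with respect to arc length, then the probability of finding Uⁿψ in any fixed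
finite box tends to zero as |n| → ∞. -/
theorem rage_absolutely_continuous
    (U : l2Z ≃ₗᵢ[ℂ] l2Z) (ψ : l2Z)
    (μ : Measure ℂ) [IsFiniteMeasure μ]
    (hsupp : μ (Metric.sphere (0 : ℂ) 1)ᶜ = 0)
    (habs : μ ≪ circleLeb)
    (hmom : ∀ n : ℤ, ∫ w, w ^ n ∂μ = (inner ℂ ψ ((U ^ n) ψ) : ℂ)) :
    ∀ J : ℕ,
      Filter.Tendsto
        (fun n : ℤ => ∑ j ∈ Finset.Icc (-(J : ℤ)) (J : ℤ),
          ‖(inner ℂ (delta j) ((U ^ n) ψ) : ℂ)‖ ^ 2)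
        Filter.cofinite (nhds 0) := by
  intro J
  have h0 : (0:ℝ) = ∑ j ∈ Finset.Icc (-(J : ℤ)) (J : ℤ), (0:ℝ) := by simp
  rw [h0]
  refine tendsto_finset_sum _ fun j _ => ?_
  have h := inner_pow_tendsto_zero U ψ μ habs hmom (delta j)
  have := (h.norm).pow 2
  simpa using this
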